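/- Let g ≥ 1, d ≥ 1, and e ≥ 1 be integers. Let C be the free abelian group with basis {P_k, p_k, Q_{i,k}, q_{i,k}, R_k, r_k : 1 ≤ i ≤ 2g, k ≥ 0}. Define ∂ : C → C by: ∂(P_0) = d·e·r_0; ∂(P_k) = d·e·r_k + d·p_{k-1} for k ≥ 1; ∂(Q_{i,k}) = d·q_{i,k-1} for k ≥ 1 and ∂(Q_{i,0}) = 0; ∂(R_k) = d·r_{k-1} for k ≥ 1 and ∂(R_0) = 0; and ∂ = 0 on all generators p_k, q_{i,k}, r_k. Then ∂² = 0, and the homology ker(∂)/im(∂) is isomorphic to ℤ^{2g+2} ⊕ ⊕_{k≥0} (ℤ/dℤ)^{2g+2}, where the free part is generated by the classes of P_0 - e·R_1, Q_{1,0}, ..., Q_{2g,0}, R_0, and the torsion part by the classes of p_k, q_{i,k}, r_k. -/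

import Mathlib

/-- The free abelian group on generators `P_k, p_k, Q_{i,k}, q_{i,k}, R_k, r_k`
(`1 ≤ i ≤ 2g`, `k ≥ 0`), as the six factors below (in that order). -/
abbrev C10 (g : ℕ) : Type :=
  ((ℕ →₀ ℤ) × (ℕ →₀ ℤ)) ×
  (((Fin (2 * g) × ℕ) →₀ ℤ) × ((Fin (2 * g) × ℕ) →₀ ℤ)) ×
  ((ℕ →₀ ℤ) × (ℕ →₀ ℤ))

noncomputable def Pg (g k : ℕ) : C10 g := ((Finsupp.single k 1, 0), (0, 0), (0, 0))
noncomputable def pg (g k : ℕ) : C10 g := ((0, Finsupp.single k 1), (0, 0), (0, 0))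
noncomputable def Qg (g : ℕ) (i : Fin (2 * g)) (k : ℕ) : C10 g :=
  ((0, 0), (Finsupp.single (i, k) 1, 0), (0, 0))
noncomputable def qg (g : ℕ) (i : Fin (2 * g)) (k : ℕ) : C10 g :=
  ((0, 0), (0, Finsupp.single (i, k) 1), (0, 0))
noncomputable def Rg (g k : ℕ) : C10 g := ((0, 0), (0, 0), (Finsupp.single k 1, 0))
noncomputable def rg (g k : ℕ) : C10 g := ((0, 0), (0, 0), (0, Finsupp.single k 1))

/-- Homology of an endomorphism viewed as a differential: `ker f / im f`. -/
abbrev lhomology {R M : Type*} [CommRing R] [AddCommGroup M] [Module R M]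
    (f : M →ₗ[R] M) :=
  LinearMap.ker f ⧸ (LinearMap.range f).comap (LinearMap.ker f).subtype


noncomputable section CHAux

abbrev Vt (g d : ℕ) : Type := ZMod d × (Fin (2 * g) → ZMod d) × ZMod d


def shN : (ℕ →₀ ℤ) →ₗ[ℤ] (ℕ →₀ ℤ) :=
  Finsupp.lcomapDomain (· + 1) (fun a b h => by simpa using h)

def shQ (g : ℕ) : ((Fin (2 * g) × ℕ) →₀ ℤ) →ₗ[ℤ] ((Fin (2 * g) × ℕ) →₀ ℤ) :=
  Finsupp.lcomapDomain (Prod.map id (· + 1))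
    (Function.Injective.prodMap (fun _ _ h => h) (fun a b h => by omega))

@[simp] lemma shN_apply (v : ℕ →₀ ℤ) (k : ℕ) : shN v k = v (k + 1) := rfl

@[simp] lemma shQ_apply (g : ℕ) (v : (Fin (2 * g) × ℕ) →₀ ℤ) (i : Fin (2 * g)) (k : ℕ) :
    shQ g v (i, k) = v (i, k + 1) := rfl

def pA (g : ℕ) : C10 g →ₗ[ℤ] (ℕ →₀ ℤ) :=
  (LinearMap.fst ℤ _ _).comp (LinearMap.fst ℤ _ _)

def pC (g : ℕ) : C10 g →ₗ[ℤ] ((Fin (2 * g) × ℕ) →₀ ℤ) :=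
  ((LinearMap.fst ℤ _ _).comp (LinearMap.fst ℤ _ _)).comp (LinearMap.snd ℤ _ _)

def pRho (g : ℕ) : C10 g →ₗ[ℤ] (ℕ →₀ ℤ) :=
  ((LinearMap.fst ℤ _ _).comp (LinearMap.snd ℤ _ _)).comp (LinearMap.snd ℤ _ _)

def Emap (g d e : ℕ) : C10 g →ₗ[ℤ] C10 g :=
  ((0 : _ →ₗ[ℤ] _).prod ((d : ℤ) • (shN.comp (pA g)))).prod
    (((0 : _ →ₗ[ℤ] _).prod ((d : ℤ) • ((shQ g).comp (pC g)))).prod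
      ((0 : _ →ₗ[ℤ] _).prod (((d : ℤ) * (e : ℤ)) • pA g + (d : ℤ) • (shN.comp (pRho g)))))

@[simp] lemma Emap_apply (g d e : ℕ) (x : C10 g) :
    Emap g d e x = ((0, (d : ℤ) • shN x.1.1), (0, (d : ℤ) • shQ g x.2.1.1),
      (0, ((d : ℤ) * (e : ℤ)) • x.1.1 + (d : ℤ) • shN x.2.2.1)) := rfl


def pB (g : ℕ) : C10 g →ₗ[ℤ] (ℕ →₀ ℤ) :=
  (LinearMap.snd ℤ _ _).comp (LinearMap.fst ℤ _ _)

def pC' (g : ℕ) : C10 g →ₗ[ℤ] ((Fin (2 * g) × ℕ) →₀ ℤ) :=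
  ((LinearMap.snd ℤ _ _).comp (LinearMap.fst ℤ _ _)).comp (LinearMap.snd ℤ _ _)

def pR' (g : ℕ) : C10 g →ₗ[ℤ] (ℕ →₀ ℤ) :=
  ((LinearMap.snd ℤ _ _).comp (LinearMap.snd ℤ _ _)).comp (LinearMap.snd ℤ _ _)

def w1 (g d : ℕ) : ℤ →+ Vt g d := (Int.castAddHom (ZMod d)).prod 0

def w2 (g d : ℕ) (i : Fin (2 * g)) : ℤ →+ Vt g d :=
  (0 : ℤ →+ ZMod d).prod
    (((AddMonoidHom.single (fun _ : Fin (2 * g) => ZMod d) i).comp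
      (Int.castAddHom (ZMod d))).prod 0)

def w3 (g d : ℕ) : ℤ →+ Vt g d :=
  (0 : ℤ →+ ZMod d).prod ((0 : ℤ →+ (Fin (2 * g) → ZMod d)).prod (Int.castAddHom (ZMod d)))

@[simp] lemma w1_apply (g d : ℕ) (m : ℤ) : w1 g d m = ((m : ZMod d), 0, 0) := rfl
@[simp] lemma w2_apply (g d : ℕ) (i : Fin (2 * g)) (m : ℤ) :
    w2 g d i m = (0, Pi.single i (m : ZMod d), 0) := rfl
@[simp] lemma w3_apply (g d : ℕ) (m : ℤ) : w3 g d m = (0, 0, (m : ZMod d)) := rfl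

def cmI (g : ℕ) (i : Fin (2 * g)) : ((Fin (2 * g) × ℕ) →₀ ℤ) →ₗ[ℤ] (ℕ →₀ ℤ) :=
  Finsupp.lcomapDomain (fun k => (i, k)) (fun a b h => congrArg Prod.snd h)

@[simp] lemma cmI_apply (g : ℕ) (i : Fin (2 * g)) (v : (Fin (2 * g) × ℕ) →₀ ℤ) (k : ℕ) :
    cmI g i v k = v (i, k) := rfl

def torMid (g d : ℕ) : ((Fin (2 * g) × ℕ) →₀ ℤ) →+ (ℕ →₀ Vt g d) :=
  ∑ i : Fin (2 * g),
    (Finsupp.mapRange.addMonoidHom (w2 g d i)).comp (cmI g i).toAddMonoidHom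

lemma torMid_apply (g d : ℕ) (v : (Fin (2 * g) × ℕ) →₀ ℤ) (k : ℕ) :
    torMid g d v k = (0, (fun i => ((v (i, k) : ℤ) : ZMod d)), 0) := by
  simp only [torMid, AddMonoidHom.finset_sum_apply, Finsupp.finset_sum_apply,
    AddMonoidHom.coe_comp, Function.comp_apply, LinearMap.toAddMonoidHom_coe,
    Finsupp.mapRange.addMonoidHom_apply, Finsupp.mapRange_apply, cmI_apply, w2_apply]
  refine Prod.ext ?_ (Prod.ext ?_ ?_)
  · simp [Prod.fst_sum]
  · simp only [Prod.snd_sum, Prod.fst_sum]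
    exact Finset.univ_sum_single _
  · simp [Prod.snd_sum]

def psiHead (g : ℕ) : C10 g →+ (ℤ × (Fin (2 * g) → ℤ) × ℤ) :=
  AddMonoidHom.mk' (fun x => (x.1.1 0, fun i => x.2.1.1 (i, 0), x.2.2.1 0))
    (by
      intro x y
      refine Prod.ext ?_ (Prod.ext (funext fun i => ?_) ?_) <;>
        simp [Finsupp.add_apply])

def psiTail (g d : ℕ) : C10 g →+ (ℕ →₀ Vt g d) :=
  (Finsupp.mapRange.addMonoidHom (w1 g d)).comp (pB g).toAddMonoidHom
  + (torMid g d).comp (pC' g).toAddMonoidHom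
  + (Finsupp.mapRange.addMonoidHom (w3 g d)).comp (pR' g).toAddMonoidHom

lemma psiTail_apply (g d : ℕ) (x : C10 g) (k : ℕ) :
    psiTail g d x k =
      ((x.1.2 k : ZMod d), (fun i => ((x.2.1.2 (i, k) : ℤ) : ZMod d)), (x.2.2.2 k : ZMod d)) := by
  simp only [psiTail, AddMonoidHom.add_apply, Finsupp.add_apply, AddMonoidHom.coe_comp,
    Function.comp_apply, LinearMap.toAddMonoidHom_coe, Finsupp.mapRange.addMonoidHom_apply,
    Finsupp.mapRange_apply, torMid_apply, w1_apply, w3_apply, pB, pC', pR',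
    LinearMap.coe_comp, LinearMap.snd_apply, LinearMap.fst_apply]
  refine Prod.ext ?_ (Prod.ext ?_ ?_) <;> simp

def psi (g d : ℕ) : C10 g →+ ((ℤ × (Fin (2 * g) → ℤ) × ℤ) × (ℕ →₀ Vt g d)) :=
  (psiHead g).prod (psiTail g d)

lemma psi_apply (g d : ℕ) (x : C10 g) :
    psi g d x = ((x.1.1 0, fun i => x.2.1.1 (i, 0), x.2.2.1 0), psiTail g d x) := rfl


lemma Emap_eq_zero_iff (g d e : ℕ) (hd : (d : ℤ) ≠ 0) (x : C10 g) :
    Emap g d e x = 0 ↔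
      shN x.1.1 = 0 ∧ shQ g x.2.1.1 = 0 ∧ (e : ℤ) • x.1.1 + shN x.2.2.1 = 0 := by
  have h0 : (0 : C10 g) = ((0, 0), (0, 0), (0, 0)) := rfl
  rw [Emap_apply, h0, Prod.mk.injEq, Prod.mk.injEq, Prod.mk.injEq, Prod.mk.injEq, Prod.mk.injEq,
    mul_smul, ← smul_add]
  simp only [smul_eq_zero, hd, false_or, true_and]

lemma exists_Emap_eq (g d e : ℕ) (b : ℕ →₀ ℤ) (c' : (Fin (2 * g) × ℕ) →₀ ℤ) (r' : ℕ →₀ ℤ)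
    (hb : ∀ k, (d : ℤ) ∣ b k) (hc : ∀ p, (d : ℤ) ∣ c' p) (hr : ∀ k, (d : ℤ) ∣ r' k) :
    ∃ y : C10 g, Emap g d e y = ((0, b), (0, c'), (0, r')) := by
  have hup : ∀ v : ℕ →₀ ℤ, shN (Finsupp.mapDomain (· + 1) v) = v := by
    intro v; ext k
    rw [shN_apply, Finsupp.mapDomain_apply (f := (· + 1)) (fun a b h => by simpa using h)]
  have hupQ : ∀ v : (Fin (2 * g) × ℕ) →₀ ℤ,
      shQ g (Finsupp.mapDomain (Prod.map id (· + 1)) v) = v := by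
    intro v; ext p
    obtain ⟨i, k⟩ := p
    rw [shQ_apply]
    exact Finsupp.mapDomain_apply
      (Function.Injective.prodMap (fun _ _ h => h) (fun a b h => by simpa using h)) v (i, k)
  have hdiv : ∀ (v : ℕ →₀ ℤ), (∀ k, (d : ℤ) ∣ v k) →
      (d : ℤ) • v.mapRange (fun m => m / (d : ℤ)) (by simp) = v := by
    intro v h; ext k
    rw [Finsupp.smul_apply, Finsupp.mapRange_apply, smul_eq_mul]
    exact Int.mul_ediv_cancel' (h k)
  have hdivQ : ∀ (v : (Fin (2 * g) × ℕ) →₀ ℤ), (∀ p, (d : ℤ) ∣ v p) →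
      (d : ℤ) • v.mapRange (fun m => m / (d : ℤ)) (by simp) = v := by
    intro v h; ext p
    rw [Finsupp.smul_apply, Finsupp.mapRange_apply, smul_eq_mul]
    exact Int.mul_ediv_cancel' (h p)
  set A : ℕ →₀ ℤ := Finsupp.mapDomain (· + 1) (b.mapRange (fun m => m / (d : ℤ)) (by simp))
    with hA
  set X : ℕ →₀ ℤ := r'.mapRange (fun m => m / (d : ℤ)) (by simp) with hX
  refine ⟨((A, 0),
    (Finsupp.mapDomain (Prod.map id (· + 1)) (c'.mapRange (fun m => m / (d : ℤ)) (by simp)), 0),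
    (Finsupp.mapDomain (· + 1) (X - (e : ℤ) • A), 0)), ?_⟩
  rw [Emap_apply]
  refine Prod.ext (Prod.ext rfl ?_) (Prod.ext (Prod.ext rfl ?_) (Prod.ext rfl ?_)) <;>
    simp only [hup, hupQ]
  · rw [hA, hup]
    exact hdiv b hb
  · exact hdivQ c' hc
  · have h : (d : ℤ) • X = r' := hdiv r' hr
    rw [smul_sub, mul_smul, h]
    abel


section GenLemmas
variable (g d e : ℕ)

@[simp] lemma shN_single_zero (m : ℤ) : shN (Finsupp.single 0 m) = 0 := by
  ext k; simp [Finsupp.single_apply]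

@[simp] lemma shN_single_succ (k : ℕ) (m : ℤ) :
    shN (Finsupp.single (k + 1) m) = Finsupp.single k m := by
  ext k'; simp [Finsupp.single_apply]

@[simp] lemma shQ_single_zero (i : Fin (2 * g)) (m : ℤ) :
    shQ g (Finsupp.single (i, 0) m) = 0 := by
  ext p; obtain ⟨i', k'⟩ := p
  simp [Finsupp.single_apply, Prod.mk.injEq]

@[simp] lemma shQ_single_succ (i : Fin (2 * g)) (k : ℕ) (m : ℤ) :
    shQ g (Finsupp.single (i, k + 1) m) = Finsupp.single (i, k) m := by
  ext p; obtain ⟨i', k'⟩ := p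
  simp [Finsupp.single_apply, Prod.mk.injEq]

lemma psi_pg (k : ℕ) : psi g d (pg g k) = (0, Finsupp.single k (1, 0, 0)) := by
  rw [psi_apply]
  refine Prod.ext (Prod.ext (by simp [pg]) (Prod.ext (funext fun i => by simp [pg]) (by simp [pg]))) ?_
  refine Finsupp.ext fun k' => ?_
  rw [psiTail_apply]
  simp only [pg, Finsupp.single_apply, Finsupp.coe_zero, Pi.zero_apply, Int.cast_zero]
  split
  · exact Prod.ext (by simp) rfl
  · exact Prod.ext (by simp) (Prod.ext rfl (by simp))

lemma psi_qg (i : Fin (2 * g)) (k : ℕ) :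
    psi g d (qg g i k) = (0, Finsupp.single k (0, Pi.single i 1, 0)) := by
  rw [psi_apply]
  refine Prod.ext (Prod.ext (by simp [qg]) (Prod.ext (funext fun i => by simp [qg]) (by simp [qg]))) ?_
  refine Finsupp.ext fun k' => ?_
  rw [psiTail_apply]
  simp only [qg, Finsupp.single_apply, Finsupp.coe_zero, Pi.zero_apply, Int.cast_zero]
  by_cases hk : k = k'
  · subst hk
    rw [if_pos rfl]
    refine Prod.ext rfl (Prod.ext (funext fun i' => ?_) rfl)
    simp [Prod.mk.injEq, Pi.single_apply, eq_comm, apply_ite (fun z : ℤ => (z : ZMod d))]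
  · rw [if_neg hk]
    refine Prod.ext rfl (Prod.ext (funext fun i' => ?_) rfl)
    simp [Prod.mk.injEq, hk]

lemma psi_rg (k : ℕ) : psi g d (rg g k) = (0, Finsupp.single k (0, 0, 1)) := by
  rw [psi_apply]
  refine Prod.ext (Prod.ext (by simp [rg]) (Prod.ext (funext fun i => by simp [rg]) (by simp [rg]))) ?_
  refine Finsupp.ext fun k' => ?_
  rw [psiTail_apply]
  simp only [rg, Finsupp.single_apply, Finsupp.coe_zero, Pi.zero_apply, Int.cast_zero]
  split
  · exact Prod.ext rfl (Prod.ext rfl (by simp))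
  · exact Prod.ext (by simp) (Prod.ext rfl (by simp))

lemma psi_Pg0 : psi g d (Pg g 0) = ((1, 0, 0), 0) := by
  rw [psi_apply]
  refine Prod.ext (Prod.ext (by simp [Pg]) (Prod.ext (funext fun i => by simp [Pg]) (by simp [Pg]))) ?_
  refine Finsupp.ext fun k' => ?_
  rw [psiTail_apply]
  simp [Pg]
  rfl

lemma psi_Rg (k : ℕ) : psi g d (Rg g k) = ((0, 0, (Finsupp.single k (1:ℤ)) 0), 0) := by
  rw [psi_apply]
  refine Prod.ext (Prod.ext (by simp [Rg]) (Prod.ext (funext fun i => by simp [Rg]) (by simp [Rg]))) ?_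
  refine Finsupp.ext fun k' => ?_
  rw [psiTail_apply]
  simp [Rg]
  rfl

lemma psi_Qg0 (i : Fin (2 * g)) : psi g d (Qg g i 0) = ((0, Pi.single i 1, 0), 0) := by
  rw [psi_apply]
  refine Prod.ext ?_ ?_
  · refine Prod.ext (by simp [Qg]) (Prod.ext (funext fun i' => ?_) (by simp [Qg]))
    simp [Qg, Finsupp.single_apply, Pi.single_apply, Prod.mk.injEq, eq_comm]
  · refine Finsupp.ext fun k' => ?_
    rw [psiTail_apply]
    simp [Qg]
    rfl

end GenLemmas

end CHAux


lemma psi_inj_aux (g d e : ℕ) [NeZero d] (x : C10 g)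
    (hS : shN x.1.1 = 0) (hSQ : shQ g x.2.1.1 = 0)
    (hE : (e : ℤ) • x.1.1 + shN x.2.2.1 = 0)
    (hu : psi g d x = 0) : ∃ y, Emap g d e y = x := by
  rw [psi_apply] at hu
  have hu1 : (x.1.1 0, fun i => x.2.1.1 (i, 0), x.2.2.1 0) =
      (0 : ℤ × (Fin (2 * g) → ℤ) × ℤ) := congrArg Prod.fst hu
  have hu2 : psiTail g d x = 0 := congrArg Prod.snd hu
  have ha0 : x.1.1 0 = 0 := by simpa using congrArg Prod.fst hu1
  have hc0 : ∀ i, x.2.1.1 (i, 0) = 0 := fun i => by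
    simpa using congrFun (congrArg (fun t => t.2.1) hu1) i
  have hρ0 : x.2.2.1 0 = 0 := by simpa using congrArg (fun t => t.2.2) hu1
  have htail : ∀ k, ((x.1.2 k : ZMod d), (fun i => ((x.2.1.2 (i, k) : ℤ) : ZMod d)),
      ((x.2.2.2 k : ZMod d))) = 0 := fun k => by
    rw [← psiTail_apply, hu2]; simp
  have hb : ∀ k, (d : ℤ) ∣ x.1.2 k := fun k => by
    have h1 : ((x.1.2 k : ℤ) : ZMod d) = 0 := by simpa using congrArg Prod.fst (htail k)
    exact_mod_cast (ZMod.intCast_zmod_eq_zero_iff_dvd _ d).mp h1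
  have hcdvd : ∀ p, (d : ℤ) ∣ x.2.1.2 p := fun p => by
    obtain ⟨i, k⟩ := p
    have h1 : ((x.2.1.2 (i, k) : ℤ) : ZMod d) = 0 := by
      simpa using congrFun (congrArg (fun t => t.2.1) (htail k)) i
    exact_mod_cast (ZMod.intCast_zmod_eq_zero_iff_dvd _ d).mp h1
  have hrdvd : ∀ k, (d : ℤ) ∣ x.2.2.2 k := fun k => by
    have h1 : ((x.2.2.2 k : ℤ) : ZMod d) = 0 := by
      simpa using congrArg (fun t => t.2.2) (htail k)
    exact_mod_cast (ZMod.intCast_zmod_eq_zero_iff_dvd _ d).mp h1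
  have hA : x.1.1 = 0 := by
    ext k
    cases k with
    | zero => simpa using ha0
    | succ k => simpa using DFunLike.congr_fun hS k
  have hC : x.2.1.1 = 0 := by
    ext p
    obtain ⟨i, k⟩ := p
    cases k with
    | zero => simpa using hc0 i
    | succ k => simpa using DFunLike.congr_fun hSQ (i, k)
  have hRho : x.2.2.1 = 0 := by
    ext k
    cases k with
    | zero => simpa using hρ0
    | succ k =>
      have h1 := DFunLike.congr_fun hE k
      simp only [Finsupp.add_apply, Finsupp.smul_apply, hA, Finsupp.coe_zero, Pi.zero_apply,
        smul_zero, zero_add, shN_apply] at h1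
      simpa using h1
  have hxeq : x = ((0, x.1.2), (0, x.2.1.2), (0, x.2.2.2)) :=
    Prod.ext (Prod.ext hA rfl) (Prod.ext (Prod.ext hC rfl) (Prod.ext hRho rfl))
  obtain ⟨y, hy⟩ := exists_Emap_eq g d e x.1.2 x.2.1.2 x.2.2.2 hb hcdvd hrdvd
  exact ⟨y, by rw [hy, ← hxeq]⟩

lemma psi_surj_aux (g d e : ℕ) [NeZero d]
    (t : (ℤ × (Fin (2 * g) → ℤ) × ℤ) × (ℕ →₀ Vt g d)) :
    ∃ x : C10 g,
      (shN x.1.1 = 0 ∧ shQ g x.2.1.1 = 0 ∧ (e : ℤ) • x.1.1 + shN x.2.2.1 = 0) ∧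
      psi g d x = t := by
  classical
  obtain ⟨⟨m, v, n⟩, F⟩ := t
  set a : ℕ →₀ ℤ := Finsupp.single 0 m with hadef
  set c : (Fin (2 * g) × ℕ) →₀ ℤ := ∑ i, Finsupp.single (i, (0 : ℕ)) (v i) with hcdef
  set ρ : ℕ →₀ ℤ := Finsupp.single 0 n - (e : ℤ) • Finsupp.single 1 m with hρdef
  set b : ℕ →₀ ℤ := F.mapRange (fun z => (z.1.val : ℤ)) (by simp [ZMod.val_zero]) with hbdef
  set c' : (Fin (2 * g) × ℕ) →₀ ℤ :=
    ∑ i, Finsupp.mapDomain (fun k => (i, k))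
      (F.mapRange (fun z => ((z.2.1 i).val : ℤ)) (by simp [ZMod.val_zero])) with hc'def
  set r' : ℕ →₀ ℤ := F.mapRange (fun z => (z.2.2.val : ℤ)) (by simp [ZMod.val_zero]) with hr'def
  refine ⟨((a, b), (c, c'), (ρ, r')), ⟨?_, ?_, ?_⟩, ?_⟩
  · simp [hadef]
  · show shQ g c = 0
    rw [hcdef, map_sum]
    simp
  · show (e : ℤ) • a + shN ρ = 0
    rw [hadef, hρdef, map_sub, map_smul]
    simp
  · rw [psi_apply]
    refine Prod.ext ?_ ?_
    · show (a 0, fun i => c (i, 0), ρ 0) = (m, v, n)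
      refine Prod.ext ?_ (Prod.ext ?_ ?_)
      · simp [hadef]
      · funext i
        show c (i, 0) = v i
        rw [hcdef, Finsupp.finset_sum_apply]
        simp only [Finsupp.single_apply, Prod.mk.injEq, and_true]
        rw [Finset.sum_ite_eq' Finset.univ i v]
        simp
      · simp [hρdef, Finsupp.sub_apply, Finsupp.smul_apply, Finsupp.single_apply]
    · refine Finsupp.ext fun k => ?_
      rw [psiTail_apply]
      show ((b k : ZMod d), (fun i => ((c' (i, k) : ℤ) : ZMod d)), ((r' k : ZMod d))) = F k
      refine Prod.ext ?_ (Prod.ext ?_ ?_)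
      · show ((b k : ℤ) : ZMod d) = (F k).1
        rw [hbdef, Finsupp.mapRange_apply]
        simp [ZMod.natCast_val, ZMod.cast_id]
      · funext i
        have hcik : c' (i, k) = (((F k).2.1 i).val : ℤ) := by
          rw [hc'def, Finsupp.finset_sum_apply]
          rw [Finset.sum_eq_single i]
          · rw [Finsupp.mapDomain_apply (fun a b h => by simpa using congrArg Prod.snd h)]
            rw [Finsupp.mapRange_apply]
          · intro j _ hj
            refine Finsupp.mapDomain_notin_range _ _ ?_
            rintro ⟨k', hk'⟩
            exact hj (congrArg Prod.fst hk')
          · simp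
        show ((c' (i, k) : ℤ) : ZMod d) = (F k).2.1 i
        rw [hcik]
        simp [ZMod.natCast_val, ZMod.cast_id]
      · show ((r' k : ℤ) : ZMod d) = (F k).2.2
        rw [hr'def, Finsupp.mapRange_apply]
        simp [ZMod.natCast_val, ZMod.cast_id]

/-- The `S¹`-equivariant contact homology of a prequantization bundle of Euler class
`e > 0` over a genus `g ≥ 1` surface, in the class of `d ≥ 1` times the fiber:
with `∂ P_0 = de·r_0`, `∂ P_k = de·r_k + d·p_{k-1}` (`k ≥ 1`),
`∂ Q_{i,k} = d·q_{i,k-1}` (`k ≥ 1`), `∂ Q_{i,0} = 0`, `∂ R_k = d·r_{k-1}` (`k ≥ 1`),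
`∂ R_0 = 0`, and `∂ = 0` on `p_k, q_{i,k}, r_k`, we have `∂² = 0` and homology
`ℤ^{2g+2} ⊕ ⊕_{k≥0} (ℤ/d)^{2g+2}`, with free part generated by the classes of
`P_0 - e·R_1`, the `Q_{i,0}`, and `R_0`, and torsion part generated by the classes of
the `p_k`, `q_{i,k}`, `r_k`. -/
theorem stmt10 (g d e : ℕ) (hg : 1 ≤ g) (hd : 1 ≤ d) (he : 1 ≤ e)
    (D : C10 g →ₗ[ℤ] C10 g)
    (hP0 : D (Pg g 0) = ((d : ℤ) * e) • rg g 0)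
    (hP : ∀ k : ℕ, D (Pg g (k + 1)) = ((d : ℤ) * e) • rg g (k + 1) + (d : ℤ) • pg g k)
    (hQ0 : ∀ i, D (Qg g i 0) = 0)
    (hQ : ∀ i (k : ℕ), D (Qg g i (k + 1)) = (d : ℤ) • qg g i k)
    (hR0 : D (Rg g 0) = 0)
    (hR : ∀ k : ℕ, D (Rg g (k + 1)) = (d : ℤ) • rg g k)
    (hp : ∀ k : ℕ, D (pg g k) = 0)
    (hq : ∀ i (k : ℕ), D (qg g i k) = 0)
    (hr : ∀ k : ℕ, D (rg g k) = 0) :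
    D ∘ₗ D = 0 ∧
    ∃ φ : lhomology D ≃+
        (ℤ × (Fin (2 * g) → ℤ) × ℤ) ×
        (ℕ →₀ (ZMod d × (Fin (2 * g) → ZMod d) × ZMod d)),
      (∀ hmem : Pg g 0 - (e : ℤ) • Rg g 1 ∈ LinearMap.ker D,
        φ (Submodule.Quotient.mk ⟨Pg g 0 - (e : ℤ) • Rg g 1, hmem⟩) = ((1, 0, 0), 0)) ∧
      (∀ i, ∀ hmem : Qg g i 0 ∈ LinearMap.ker D,
        φ (Submodule.Quotient.mk ⟨Qg g i 0, hmem⟩) = ((0, Pi.single i 1, 0), 0)) ∧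
      (∀ hmem : Rg g 0 ∈ LinearMap.ker D,
        φ (Submodule.Quotient.mk ⟨Rg g 0, hmem⟩) = ((0, 0, 1), 0)) ∧
      (∀ k, ∀ hmem : pg g k ∈ LinearMap.ker D,
        φ (Submodule.Quotient.mk ⟨pg g k, hmem⟩) = (0, Finsupp.single k (1, 0, 0))) ∧
      (∀ i k, ∀ hmem : qg g i k ∈ LinearMap.ker D,
        φ (Submodule.Quotient.mk ⟨qg g i k, hmem⟩) =
          (0, Finsupp.single k (0, Pi.single i 1, 0))) ∧
      (∀ k, ∀ hmem : rg g k ∈ LinearMap.ker D,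
        φ (Submodule.Quotient.mk ⟨rg g k, hmem⟩) = (0, Finsupp.single k (0, 0, 1))) := by
  classical
  haveI : NeZero d := ⟨by omega⟩
  have hd0 : (d : ℤ) ≠ 0 := by exact_mod_cast (by omega : d ≠ 0)
  have hD : D = Emap g d e := by
    refine LinearMap.prod_ext
      (LinearMap.prod_ext (Finsupp.lhom_ext' fun k => LinearMap.ext_ring ?_)
        (Finsupp.lhom_ext' fun k => LinearMap.ext_ring ?_))
      (LinearMap.prod_ext
        (LinearMap.prod_ext (Finsupp.lhom_ext' fun k => LinearMap.ext_ring ?_)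
          (Finsupp.lhom_ext' fun k => LinearMap.ext_ring ?_))
        (LinearMap.prod_ext (Finsupp.lhom_ext' fun k => LinearMap.ext_ring ?_)
          (Finsupp.lhom_ext' fun k => LinearMap.ext_ring ?_)))
    · show D (Pg g k) = Emap g d e (Pg g k)
      cases k with
      | zero =>
        rw [hP0]
        simp [Pg, rg, Emap_apply, Prod.smul_mk, smul_zero]
      | succ k =>
        rw [hP k]
        simp [Pg, pg, rg, Emap_apply, Prod.smul_mk, Prod.mk_add_mk, smul_zero]
    · show D (pg g k) = Emap g d e (pg g k)
      rw [hp k]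
      simp [pg, Emap_apply]
      rfl
    · obtain ⟨i, k⟩ := k
      show D (Qg g i k) = Emap g d e (Qg g i k)
      cases k with
      | zero =>
        rw [hQ0 i]
        simp [Qg, Emap_apply]
        rfl
      | succ k =>
        rw [hQ i k]
        simp [Qg, qg, Emap_apply, Prod.smul_mk, smul_zero]
    · obtain ⟨i, k⟩ := k
      show D (qg g i k) = Emap g d e (qg g i k)
      rw [hq i k]
      simp [qg, Emap_apply]
      rfl
    · show D (Rg g k) = Emap g d e (Rg g k)
      cases k with
      | zero =>
        rw [hR0]
        simp [Rg, Emap_apply]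
        rfl
      | succ k =>
        rw [hR k]
        simp [Rg, rg, Emap_apply, Prod.smul_mk, smul_zero]
    · show D (rg g k) = Emap g d e (rg g k)
      rw [hr k]
      simp [rg, Emap_apply]
      rfl
  have hDD : D ∘ₗ D = 0 := by
    rw [hD]
    refine LinearMap.ext fun x => ?_
    rw [LinearMap.comp_apply, Emap_apply, Emap_apply]
    simp
  refine ⟨hDD, ?_⟩
  have hkerE : ∀ x : C10 g, D x = 0 ↔
      shN x.1.1 = 0 ∧ shQ g x.2.1.1 = 0 ∧ (e : ℤ) • x.1.1 + shN x.2.2.1 = 0 := fun x => by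
    rw [hD]; exact Emap_eq_zero_iff g d e hd0 x
  have hcast0 : ∀ z : ℤ, (d : ℤ) ∣ z → ((z : ZMod d) = 0) := fun z hz =>
    (ZMod.intCast_zmod_eq_zero_iff_dvd z d).mpr (by exact_mod_cast hz)
  have hpsi0 : ∀ (b : ℕ →₀ ℤ) (c' : (Fin (2 * g) × ℕ) →₀ ℤ) (r' : ℕ →₀ ℤ),
      (∀ k, (d : ℤ) ∣ b k) → (∀ p, (d : ℤ) ∣ c' p) → (∀ k, (d : ℤ) ∣ r' k) →
      psi g d ((0, b), (0, c'), (0, r')) = 0 := by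
    intro b c' r' hb hc hr
    rw [psi_apply]
    refine Prod.ext (Prod.ext (by simp) (Prod.ext (funext fun i => by simp) (by simp))) ?_
    refine Finsupp.ext fun k => ?_
    rw [psiTail_apply]
    show ((b k : ZMod d), (fun i => ((c' (i, k) : ℤ) : ZMod d)), ((r' k : ZMod d))) = _
    rw [hcast0 _ (hb k), hcast0 _ (hr k)]
    have h2 : (fun i => ((c' (i, k) : ℤ) : ZMod d)) = 0 := funext fun i => hcast0 _ (hc (i, k))
    rw [h2]
    simp
  set K := (LinearMap.range D).comap (LinearMap.ker D).subtype with hKdef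
  have hle : K ≤ LinearMap.ker ((psi g d).toIntLinearMap.comp (LinearMap.ker D).subtype) := by
    rintro ⟨x, hx⟩ hxK
    obtain ⟨y, hy⟩ : x ∈ LinearMap.range D := hxK
    rw [LinearMap.mem_ker]
    show psi g d x = 0
    rw [← hy, hD, Emap_apply]
    refine hpsi0 _ _ _ (fun k => by simp) (fun p => by simp) (fun k => ?_)
    rw [Finsupp.add_apply, Finsupp.smul_apply, Finsupp.smul_apply]
    exact ⟨(e : ℤ) * y.1.1 k + shN y.2.2.1 k, by simp only [smul_eq_mul]; ring⟩
  set f : lhomology D →ₗ[ℤ] _ :=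
    Submodule.liftQ K ((psi g d).toIntLinearMap.comp (LinearMap.ker D).subtype) hle with hfdef
  have hfmk : ∀ (x : C10 g) (hx : x ∈ LinearMap.ker D),
      f (Submodule.Quotient.mk ⟨x, hx⟩) = psi g d x := by
    intro x hx
    rw [hfdef, Submodule.liftQ_apply]
    rfl
  have hinj : Function.Injective f := by
    refine (injective_iff_map_eq_zero f).mpr ?_
    intro u hu
    obtain ⟨⟨x, hx⟩, rfl⟩ := Submodule.Quotient.mk_surjective K u
    rw [hfmk x hx] at hu
    rw [Submodule.Quotient.mk_eq_zero]
    obtain ⟨hS, hSQ, hE⟩ := (hkerE x).mp (LinearMap.mem_ker.mp hx)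
    obtain ⟨y, hy⟩ := psi_inj_aux g d e x hS hSQ hE hu
    rw [hKdef]
    simp only [Submodule.mem_comap, Submodule.coe_subtype]
    exact ⟨y, by rw [hD, hy]⟩
  have hsurj : Function.Surjective f := by
    intro t
    obtain ⟨x, hxk3, hpsix⟩ := psi_surj_aux g d e t
    have hxker : x ∈ LinearMap.ker D := by
      rw [LinearMap.mem_ker, hkerE x]; exact hxk3
    exact ⟨Submodule.Quotient.mk ⟨x, hxker⟩, by rw [hfmk x hxker, hpsix]⟩
  have hbij : Function.Bijective f.toAddMonoidHom := ⟨hinj, hsurj⟩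
  have hφ : ∀ (x : C10 g) (hx : x ∈ LinearMap.ker D),
      (AddEquiv.ofBijective f.toAddMonoidHom hbij) (Submodule.Quotient.mk ⟨x, hx⟩) =
        psi g d x := fun x hx => hfmk x hx
  refine ⟨AddEquiv.ofBijective f.toAddMonoidHom hbij, ?_, ?_, ?_, ?_, ?_, ?_⟩
  · intro hmem
    rw [hφ _ hmem, map_sub, AddMonoidHom.map_zsmul, psi_Pg0, psi_Rg]
    simp [Finsupp.single_apply]
    rfl
  · intro i hmem
    rw [hφ _ hmem, psi_Qg0]
  · intro hmem
    rw [hφ _ hmem, psi_Rg]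
    simp [Finsupp.single_apply]
  · intro k hmem
    rw [hφ _ hmem, psi_pg]
  · intro i k hmem
    rw [hφ _ hmem, psi_qg]
  · intro k hmem
    rw [hφ _ hmem, psi_rg]
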